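/- For a Hom-Lie-Yamaguti algebra (L, [·,·], {·,·,·}, α), the space Der(L) = ⊕_{k≥0} Der_{α^k}(L) of all α^k-derivations (k ≥ 0) is closed under the commutator bracket [D, D'] = D∘D' − D'∘D and forms a Lie algebra. -/
import Mathlib


/-- A Hom-Lie-Yamaguti algebra over a field `K`. -/
structure HLY (K L : Type*) [Field K] [AddCommGroup L] [Module K L] where
  br : L →ₗ[K] L →ₗ[K] L
  tr : L →ₗ[K] L →ₗ[K] L →ₗ[K] L
  a : L →ₗ[K] L
  a_br : ∀ x y, a (br x y) = br (a x) (a y)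
  a_tr : ∀ x y z, a (tr x y z) = tr (a x) (a y) (a z)
  br_alt : ∀ x, br x x = 0
  tr_alt : ∀ x y, tr x x y = 0
  ax5 : ∀ x y z,
    (br (br x y) (a z) + tr x y z) + (br (br y z) (a x) + tr y z x) +
      (br (br z x) (a y) + tr z x y) = 0
  ax6 : ∀ x y z u,
    tr (br x y) (a z) (a u) + tr (br y z) (a x) (a u) + tr (br z x) (a y) (a u) = 0
  ax7 : ∀ x y u v,
    tr (a x) (a y) (br u v) = br (tr x y u) (a (a v)) + br (a (a u)) (tr x y v)
  ax8 : ∀ u v x y z,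
    tr (a (a u)) (a (a v)) (tr x y z) =
      tr (tr u v x) (a (a y)) (a (a z)) + tr (a (a x)) (tr u v y) (a (a z)) +
        tr (a (a x)) (a (a y)) (tr u v z)

variable {K L : Type*} [Field K] [AddCommGroup L] [Module K L]

/-- `D` is an `α^k`-derivation of the Hom-Lie-Yamaguti algebra `H`. -/
def IsDer (H : HLY K L) (k : ℕ) (D : Module.End K L) : Prop :=
  (∀ x, D (H.a x) = H.a (D x)) ∧
  (∀ x y, D (H.br x y) = H.br ((H.a ^ k) x) (D y) + H.br (D x) ((H.a ^ k) y)) ∧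
  (∀ x y z, D (H.tr x y z) =
    H.tr (D x) ((H.a ^ k) y) ((H.a ^ k) z) + H.tr ((H.a ^ k) x) (D y) ((H.a ^ k) z) +
      H.tr ((H.a ^ k) x) ((H.a ^ k) y) (D z))


lemma comm_pow {D A : Module.End K L} (h : ∀ x, D (A x) = A (D x)) (k : ℕ) (x : L) :
    D ((A ^ k) x) = (A ^ k) (D x) := by
  have hc : Commute D A := LinearMap.ext h
  exact LinearMap.congr_fun (hc.pow_right k) x

lemma isDer_comm (H : HLY K L) {k l : ℕ} {D D' : Module.End K L}
    (hD : IsDer H k D) (hD' : IsDer H l D') :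
    IsDer H (k + l) (D * D' - D' * D) := by
  obtain ⟨ha, hbr, htr⟩ := hD
  obtain ⟨ha', hbr', htr'⟩ := hD'
  have hpow : ∀ x, ((H.a ^ (k + l)) x) = (H.a ^ k) ((H.a ^ l) x) := by
    intro x; rw [pow_add]; rfl
  have hpow' : ∀ x, (H.a ^ l) ((H.a ^ k) x) = (H.a ^ k) ((H.a ^ l) x) := by
    intro x
    have : H.a ^ l * H.a ^ k = H.a ^ k * H.a ^ l := by
      rw [← pow_add, ← pow_add, add_comm]
    exact LinearMap.congr_fun this x
  refine ⟨?_, ?_, ?_⟩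
  · intro x
    simp only [LinearMap.sub_apply, Module.End.mul_apply, ha, ha', map_sub]
  · intro x y
    simp only [LinearMap.sub_apply, Module.End.mul_apply, hbr, hbr', map_add, map_sub,
      LinearMap.add_apply, LinearMap.sub_apply, comm_pow ha, comm_pow ha', hpow, hpow']
    abel
  · intro x y z
    simp only [LinearMap.sub_apply, Module.End.mul_apply, htr, htr', map_add, map_sub,
      LinearMap.add_apply, LinearMap.sub_apply, comm_pow ha, comm_pow ha', hpow, hpow']
    abel

/-- `Der(L) = ⊕_{k ≥ 0} Der_{α^k}(L)` (the span of all `α^k`-derivations inside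
`End(L)`) is closed under the commutator bracket, hence is a Lie subalgebra of
the endomorphism Lie algebra. -/
theorem der_closed_under_bracket (H : HLY K L)
    (D D' : Module.End K L)
    (hD : D ∈ Submodule.span K {E : Module.End K L | ∃ k : ℕ, IsDer H k E})
    (hD' : D' ∈ Submodule.span K {E : Module.End K L | ∃ k : ℕ, IsDer H k E}) :
    D * D' - D' * D ∈ Submodule.span K {E : Module.End K L | ∃ k : ℕ, IsDer H k E} := by
  induction hD, hD' using Submodule.span_induction₂ with
  | mem_mem x y hx hy =>
    obtain ⟨k, hk⟩ := hx
    obtain ⟨l, hl⟩ := hy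
    exact Submodule.subset_span ⟨k + l, isDer_comm H hk hl⟩
  | zero_left y hy => simpa using Submodule.zero_mem _
  | zero_right x hx => simpa using Submodule.zero_mem _
  | add_left x y z hx hy hz h1 h2 =>
    have : (x + y) * z - z * (x + y) = (x * z - z * x) + (y * z - z * y) := by noncomm_ring
    rw [this]; exact Submodule.add_mem _ h1 h2
  | add_right x y z hx hy hz h1 h2 =>
    have : x * (y + z) - (y + z) * x = (x * y - y * x) + (x * z - z * x) := by noncomm_ring
    rw [this]; exact Submodule.add_mem _ h1 h2
  | smul_left r x y hx hy h =>
    have : (r • x) * y - y * (r • x) = r • (x * y - y * x) := by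
      simp [smul_sub, smul_mul_assoc, mul_smul_comm]
    rw [this]; exact Submodule.smul_mem _ _ h
  | smul_right r x y hx hy h =>
    have : x * (r • y) - (r • y) * x = r • (x * y - y * x) := by
      simp [smul_sub, smul_mul_assoc, mul_smul_comm]
    rw [this]; exact Submodule.smul_mem _ _ h
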